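/- Let T and S be Hermitian endomorphisms of an N-dimensional complex inner product space, with operator norm ‖S‖ ≤ ε. If the eigenvalues of T (with multiplicity, in increasing order) are λ₁ ≤ ... ≤ λ_N and those of T + S are μ₁ ≤ ... ≤ μ_N, then |λ_j − μ_j| ≤ ε for every j. -/

import Mathlib

open Module

section Helpers

variable {V : Type*} [NormedAddCommGroup V] [InnerProductSpace ℂ V] [FiniteDimensional ℂ V]

omit [FiniteDimensional ℂ V] in
lemma quad_form_aux {N : ℕ} (b : OrthonormalBasis (Fin N) ℂ V) (A : V →L[ℂ] V) (ν : Fin N → ℝ)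
    (hA : ∀ i, A (b i) = (ν i : ℂ) • b i) (x : V) :
    Complex.re (inner ℂ x (A x)) = ∑ i, ν i * ‖b.repr x i‖ ^ 2 := by
  have hx : A x = ∑ i, ((ν i : ℂ) * b.repr x i) • b i := by
    conv_lhs => rw [← b.sum_repr x]
    rw [map_sum]
    simp_rw [map_smul, hA, smul_smul, mul_comm]
  have : (inner ℂ x (A x) : ℂ) = ∑ i, ((ν i : ℂ) * b.repr x i) * (starRingEnd ℂ) (b.repr x i) := by
    rw [hx, inner_sum]
    congr 1; ext i
    rw [inner_smul_right]
    congr 1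
    rw [b.repr_apply_apply, ← inner_conj_symm]
  rw [this]
  simp_rw [mul_assoc, RCLike.mul_conj]
  rw [Complex.re_sum]
  congr 1; ext i
  simp [← Complex.ofReal_pow]

omit [FiniteDimensional ℂ V] in
lemma norm_sq_repr_aux {N : ℕ} (b : OrthonormalBasis (Fin N) ℂ V) (x : V) :
    ‖x‖ ^ 2 = ∑ i, ‖b.repr x i‖ ^ 2 := by
  have h := quad_form_aux b (ContinuousLinearMap.id ℂ V) (fun _ => 1) (fun i => by simp) x
  have h2 : (inner ℂ x x : ℂ).re = ‖x‖ ^ 2 := by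
    rw [← inner_self_eq_norm_sq (𝕜 := ℂ) x]; rfl
  simpa [h2, ← Complex.ofReal_pow] using h

omit [FiniteDimensional ℂ V] in
lemma repr_eq_zero_aux {N : ℕ} (b : OrthonormalBasis (Fin N) ℂ V) (s : Set (Fin N)) (x : V)
    (hx : x ∈ Submodule.span ℂ (b '' s)) {i : Fin N} (hi : i ∉ s) : b.repr x i = 0 := by
  rw [b.repr_apply_apply]
  induction hx using Submodule.span_induction with
  | mem y hy =>
    obtain ⟨k, hk, rfl⟩ := hy
    exact b.orthonormal.2 (fun h => hi (by rw [h]; exact hk))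
  | zero => exact inner_zero_right _
  | add y z _ _ hy hz => rw [inner_add_right, hy, hz, add_zero]
  | smul c y _ hy => rw [inner_smul_right, hy, mul_zero]

omit [FiniteDimensional ℂ V] in
lemma finrank_span_image_aux {N : ℕ} (b : OrthonormalBasis (Fin N) ℂ V) (s : Set (Fin N))
    [Fintype s] : finrank ℂ (Submodule.span ℂ (b '' s)) = Fintype.card s := by
  have hr : b '' s = Set.range (fun i : s => b i) := by
    rw [← Set.image_eq_range]
  rw [hr]
  exact finrank_span_eq_card
    (b.orthonormal.linearIndependent.comp ((↑) : s → Fin N) Subtype.val_injective)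

lemma one_side_aux (N : ℕ) (hN : Module.finrank ℂ V = N)
    (T S : V →L[ℂ] V) (ε : ℝ) (hε : ‖S‖ ≤ ε)
    (lam mu : Fin N → ℝ) (hlam : Monotone lam) (hmu : Monotone mu)
    (bT : OrthonormalBasis (Fin N) ℂ V) (hbT : ∀ j, T (bT j) = (lam j : ℂ) • bT j)
    (bTS : OrthonormalBasis (Fin N) ℂ V)
    (hbTS : ∀ j, (T + S) (bTS j) = (mu j : ℂ) • bTS j)
    (j : Fin N) : mu j - lam j ≤ ε := by
  set U := Submodule.span ℂ (bT '' Set.Iic j) with hUdef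
  set W := Submodule.span ℂ (bTS '' Set.Ici j) with hWdef
  have hU : finrank ℂ U = (j : ℕ) + 1 := by
    rw [hUdef, finrank_span_image_aux, Fintype.card_Iic, Fin.card_Iic]
  have hW : finrank ℂ W = N - (j : ℕ) := by
    rw [hWdef, finrank_span_image_aux, Fintype.card_Ici, Fin.card_Ici]
  have hsum := Submodule.finrank_sup_add_finrank_inf_eq U W
  have hle : finrank ℂ (U ⊔ W : Submodule ℂ V) ≤ N := hN ▸ Submodule.finrank_le _
  have hpos : 0 < finrank ℂ (U ⊓ W : Submodule ℂ V) := by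
    have hj : (j : ℕ) < N := j.2
    omega
  obtain ⟨⟨x, hxUW⟩, hx0⟩ := Module.finrank_pos_iff_exists_ne_zero.mp hpos
  have hxU : x ∈ U := hxUW.1
  have hxW : x ∈ W := hxUW.2
  have hxne : x ≠ 0 := by
    intro h
    exact hx0 (by simp [h])
  have hnx : (0 : ℝ) < ‖x‖ ^ 2 := pow_pos (norm_pos_iff.mpr hxne) 2
  have hTx : Complex.re (inner ℂ x (T x)) ≤ lam j * ‖x‖ ^ 2 := by
    rw [quad_form_aux bT T lam hbT x, norm_sq_repr_aux bT x, Finset.mul_sum]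
    apply Finset.sum_le_sum
    intro i _
    by_cases hij : i ∈ Set.Iic j
    · exact mul_le_mul_of_nonneg_right (hlam hij) (by positivity)
    · rw [repr_eq_zero_aux bT _ x hxU hij]; simp
  have hTSx : mu j * ‖x‖ ^ 2 ≤ Complex.re (inner ℂ x ((T + S) x)) := by
    rw [quad_form_aux bTS (T + S) mu hbTS x, norm_sq_repr_aux bTS x, Finset.mul_sum]
    apply Finset.sum_le_sum
    intro i _
    by_cases hij : i ∈ Set.Ici j
    · exact mul_le_mul_of_nonneg_right (hmu hij) (by positivity)
    · rw [repr_eq_zero_aux bTS _ x hxW hij]; simp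
  have hSx : Complex.re (inner ℂ x (S x)) ≤ ε * ‖x‖ ^ 2 := by
    have h1 : Complex.re (inner ℂ x (S x)) ≤ ‖(inner ℂ x (S x) : ℂ)‖ := Complex.re_le_norm _
    have h2 : ‖(inner ℂ x (S x) : ℂ)‖ ≤ ‖x‖ * ‖S x‖ := norm_inner_le_norm x (S x)
    have h3 : ‖S x‖ ≤ ‖S‖ * ‖x‖ := S.le_opNorm x
    have h4 : (0 : ℝ) ≤ ‖x‖ := norm_nonneg x
    nlinarith
  have expand : Complex.re (inner ℂ x ((T + S) x))
      = Complex.re (inner ℂ x (T x)) + Complex.re (inner ℂ x (S x)) := by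
    simp [inner_add_right]
  nlinarith

end Helpers

/-- Perturbation of eigenvalues of a Hermitian endomorphism: if `S` has operator
norm at most `ε`, the ordered eigenvalues of `T` and `T + S` differ by at most `ε`. -/
theorem eigenvalue_perturbation
    {V : Type*} [NormedAddCommGroup V] [InnerProductSpace ℂ V] [FiniteDimensional ℂ V]
    (N : ℕ) (hN : Module.finrank ℂ V = N)
    (T S : V →L[ℂ] V) (hT : IsSelfAdjoint T) (hS : IsSelfAdjoint S)
    (ε : ℝ) (hε : ‖S‖ ≤ ε)
    (lam mu : Fin N → ℝ) (hlam : Monotone lam) (hmu : Monotone mu)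
    (bT : OrthonormalBasis (Fin N) ℂ V) (hbT : ∀ j, T (bT j) = (lam j : ℂ) • bT j)
    (bTS : OrthonormalBasis (Fin N) ℂ V)
    (hbTS : ∀ j, (T + S) (bTS j) = (mu j : ℂ) • bTS j) :
    ∀ j, |lam j - mu j| ≤ ε := by
  intro j
  rw [abs_sub_le_iff]
  constructor
  · have hkey : (T + S) + (-S) = T := by abel
    exact one_side_aux N hN (T + S) (-S) ε (by rwa [norm_neg]) mu lam hmu hlam bTS hbTS bT
      (fun k => by rw [hkey]; exact hbT k) j
  · exact one_side_aux N hN T S ε hε lam mu hlam hmu bT hbT bTS hbTS j
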